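/- (Denjoy's lemma) Let f ∈ Diff_0([0,1]) be such that log f' has total variation v(f) < ∞ on [0,1]. If J ⊆ [0,1] is a closed interval with f(J) ∩ J = ∅, then for every n ∈ ℕ and all x, y ∈ J one has e^{−v(f)} ≤ (fⁿ)'(x)/(fⁿ)'(y) ≤ e^{v(f)}. -/

import Mathlib

/-- `IsDiff0 f g` says that `f` is an orientation-preserving `C¹` diffeomorphism of the
interval `[0,1]` fixing the endpoints, with inverse `g`. -/
structure IsDiff0 (f g : ℝ → ℝ) : Prop where
  mapsTo : Set.MapsTo f (Set.Icc 0 1) (Set.Icc 0 1)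
  mapsTo_inv : Set.MapsTo g (Set.Icc 0 1) (Set.Icc 0 1)
  left_inv : ∀ x ∈ Set.Icc (0:ℝ) 1, g (f x) = x
  right_inv : ∀ x ∈ Set.Icc (0:ℝ) 1, f (g x) = x
  map_zero : f 0 = 0
  map_one : f 1 = 1
  contDiffOn : ContDiffOn ℝ 1 f (Set.Icc 0 1)
  contDiffOn_inv : ContDiffOn ℝ 1 g (Set.Icc 0 1)
  deriv_pos : ∀ x ∈ Set.Icc (0:ℝ) 1, 0 < derivWithin f (Set.Icc 0 1) x

/-- The growth sequence `Γ_n(f) = max (sup_x (fⁿ)'(x), sup_x (f⁻ⁿ)'(x))`, where `g = f⁻¹`. -/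
noncomputable def Gamma (f g : ℝ → ℝ) (n : ℕ) : ℝ :=
  max (⨆ x : Set.Icc (0:ℝ) 1, derivWithin (f^[n]) (Set.Icc 0 1) (x : ℝ))
      (⨆ x : Set.Icc (0:ℝ) 1, derivWithin (g^[n]) (Set.Icc 0 1) (x : ℝ))

open Set Finset

namespace DenjoyAux

variable {f g : ℝ → ℝ}

lemma hasDerivWithinAt_iterate (hf : IsDiff0 f g) (n : ℕ) {x : ℝ} (hx : x ∈ Icc (0:ℝ) 1) :
    HasDerivWithinAt (f^[n])
      (∏ k ∈ Finset.range n, derivWithin f (Icc 0 1) (f^[k] x)) (Icc 0 1) x := by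
  induction n with
  | zero => simpa using (hasDerivWithinAt_id x (Icc (0:ℝ) 1))
  | succ n ih =>
    have hfx : f^[n] x ∈ Icc (0:ℝ) 1 := hf.mapsTo.iterate n hx
    have hdf : HasDerivWithinAt f (derivWithin f (Icc 0 1) (f^[n] x)) (Icc 0 1) (f^[n] x) :=
      ((hf.contDiffOn.differentiableOn one_ne_zero) _ hfx).hasDerivWithinAt
    have hcomp := HasDerivWithinAt.comp x hdf ih (hf.mapsTo.iterate n)
    rw [Function.iterate_succ']
    rw [Finset.prod_range_succ, mul_comm]
    exact hcomp

lemma derivWithin_iterate (hf : IsDiff0 f g) (n : ℕ) {x : ℝ} (hx : x ∈ Icc (0:ℝ) 1) :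
    derivWithin (f^[n]) (Icc 0 1) x
      = ∏ k ∈ Finset.range n, derivWithin f (Icc 0 1) (f^[k] x) :=
  (hasDerivWithinAt_iterate hf n hx).derivWithin (uniqueDiffOn_Icc_zero_one x hx)

lemma strictMonoOn_of_diff0 (hf : IsDiff0 f g) : StrictMonoOn f (Icc (0:ℝ) 1) := by
  apply strictMonoOn_of_deriv_pos (convex_Icc 0 1) (hf.contDiffOn.continuousOn)
  intro x hx
  rw [interior_Icc] at hx
  have h := hf.deriv_pos x (Ioo_subset_Icc_self hx)
  rwa [derivWithin_of_mem_nhds (Icc_mem_nhds hx.1 hx.2)] at h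

lemma strictMonoOn_iterate (hf : IsDiff0 f g) (n : ℕ) :
    StrictMonoOn (f^[n]) (Icc (0:ℝ) 1) := by
  induction n with
  | zero => simpa using strictMonoOn_id
  | succ n ih =>
    rw [Function.iterate_succ]
    exact ih.comp (strictMonoOn_of_diff0 hf) hf.mapsTo

/-- Key variation bound: if `c k ≤ d k` are ordered points in `[0,1]` with the intervals
`[c k, d k]` arranged in increasing order, then the sum of oscillations of `φ` over these
pairs is bounded by the total variation of `φ`. -/
lemma sum_var_le (φ : ℝ → ℝ) {n : ℕ} {c d : ℕ → ℝ}
    (hmemc : ∀ k, k < n → c k ∈ Icc (0:ℝ) 1) (hmemd : ∀ k, k < n → d k ∈ Icc (0:ℝ) 1)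
    (hcd : ∀ k, k < n → c k ≤ d k) (hord : ∀ k, k + 1 < n → d k ≤ c (k + 1))
    {v : ℝ} (hv0 : 0 ≤ v)
    (hv : eVariationOn φ (Icc 0 1) = ENNReal.ofReal v) :
    ∑ k ∈ Finset.range n, |φ (d k) - φ (c k)| ≤ v := by
  rcases Nat.eq_zero_or_pos n with h0 | hn
  · simpa [h0] using hv0
  set u : ℕ → ℝ := fun i =>
    if (min i (2 * n - 1)) % 2 = 0 then c ((min i (2 * n - 1)) / 2)
    else d ((min i (2 * n - 1)) / 2) with hu_def
  have hu2k : ∀ k, k < n → u (2 * k) = c k := by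
    intro k hk
    have h1 : min (2 * k) (2 * n - 1) = 2 * k := by omega
    have h3 : 2 * k / 2 = k := by omega
    simp [hu_def, h1, Nat.mul_mod_right, h3]
  have hu2k1 : ∀ k, k < n → u (2 * k + 1) = d k := by
    intro k hk
    have h1 : min (2 * k + 1) (2 * n - 1) = 2 * k + 1 := by omega
    have h2 : (2 * k + 1) % 2 = 1 := by omega
    have h3 : (2 * k + 1) / 2 = k := by omega
    simp [hu_def, h1, h2, h3]
  have humem : ∀ i, u i ∈ Icc (0:ℝ) 1 := by
    intro i
    have hlt : (min i (2 * n - 1)) / 2 < n := by omega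
    by_cases h : (min i (2 * n - 1)) % 2 = 0
    · simp only [hu_def, h, if_true]
      exact hmemc _ hlt
    · simp only [hu_def, h, if_false]
      exact hmemd _ hlt
  have humono : Monotone u := by
    apply monotone_nat_of_le_succ
    intro i
    by_cases hbig : 2 * n - 1 ≤ i
    · have h1 : min i (2 * n - 1) = 2 * n - 1 := by omega
      have h2 : min (i + 1) (2 * n - 1) = 2 * n - 1 := by omega
      simp [hu_def, h1, h2]
    · have h1 : min i (2 * n - 1) = i := by omega
      have h2 : min (i + 1) (2 * n - 1) = i + 1 := by omega
      by_cases he : i % 2 = 0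
      · have he1 : (i + 1) % 2 = 1 := by omega
        have hdiv : (i + 1) / 2 = i / 2 := by omega
        have hlt : i / 2 < n := by omega
        simp only [hu_def, h1, h2, he, he1, if_true, hdiv]
        simpa using hcd _ hlt
      · have he1 : (i + 1) % 2 = 0 := by omega
        have hdiv : (i + 1) / 2 = i / 2 + 1 := by omega
        have hlt : i / 2 + 1 < n := by omega
        simp only [hu_def, h1, h2, he, he1, if_true, if_false, hdiv]
        exact hord _ hlt
  have key := eVariationOn.sum_le (f := φ) (n := 2 * n) humono humem
  have hstep : ∑ k ∈ Finset.range n, edist (φ (d k)) (φ (c k))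
      ≤ ∑ i ∈ Finset.range (2 * n), edist (φ (u (i + 1))) (φ (u i)) := by
    have heq : ∑ k ∈ Finset.range n, edist (φ (d k)) (φ (c k))
        = ∑ i ∈ (Finset.range n).image (fun k => 2 * k),
            edist (φ (u (i + 1))) (φ (u i)) := by
      rw [Finset.sum_image (by intro a _ b _ h; simp only at h; omega)]
      apply Finset.sum_congr rfl
      intro k hk
      rw [Finset.mem_range] at hk
      rw [hu2k k hk, hu2k1 k hk]
    rw [heq]
    apply Finset.sum_le_sum_of_subset
    intro i hi
    simp only [Finset.mem_image, Finset.mem_range] at hi ⊢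
    omega
  have hle : ∑ k ∈ Finset.range n, edist (φ (d k)) (φ (c k)) ≤ ENNReal.ofReal v := by
    rw [← hv]; exact hstep.trans key
  have hconv : ENNReal.ofReal (∑ k ∈ Finset.range n, |φ (d k) - φ (c k)|)
      = ∑ k ∈ Finset.range n, edist (φ (d k)) (φ (c k)) := by
    rw [ENNReal.ofReal_sum_of_nonneg]
    · apply Finset.sum_congr rfl
      intro k _
      rw [edist_dist, Real.dist_eq, abs_sub_comm]
    · intro k _; exact abs_nonneg _
  rw [← hconv] at hle
  exact (ENNReal.ofReal_le_ofReal_iff hv0).mp hle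

end DenjoyAux

/-- Denjoy's lemma: if `log f'` has total variation `v` on `[0,1]` and `J = [a,b] ⊆ [0,1]`
is a closed interval with `f(J) ∩ J = ∅`, then for every `n` and all `x, y ∈ J`,
`e^{-v} ≤ (fⁿ)'(x)/(fⁿ)'(y) ≤ e^{v}`. -/
theorem denjoy_lemma (f g : ℝ → ℝ) (hf : IsDiff0 f g) (v : ℝ) (hv0 : 0 ≤ v)
    (hv : eVariationOn (fun x => Real.log (derivWithin f (Set.Icc 0 1) x)) (Set.Icc 0 1)
      = ENNReal.ofReal v)
    (a b : ℝ) (hab : a ≤ b) (hJ : Set.Icc a b ⊆ Set.Icc 0 1)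
    (hdisj : f '' Set.Icc a b ∩ Set.Icc a b = ∅) :
    ∀ n : ℕ, ∀ x ∈ Set.Icc a b, ∀ y ∈ Set.Icc a b,
      Real.exp (-v) ≤ derivWithin (f^[n]) (Set.Icc 0 1) x / derivWithin (f^[n]) (Set.Icc 0 1) y ∧
      derivWithin (f^[n]) (Set.Icc 0 1) x / derivWithin (f^[n]) (Set.Icc 0 1) y ≤ Real.exp v := by
  classical
  intro n x hx y hy
  set φ : ℝ → ℝ := fun t => Real.log (derivWithin f (Set.Icc 0 1) t) with hφ
  have hxI : x ∈ Set.Icc (0:ℝ) 1 := hJ hx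
  have hyI : y ∈ Set.Icc (0:ℝ) 1 := hJ hy
  have hmono := DenjoyAux.strictMonoOn_of_diff0 hf
  have hmonoIter := DenjoyAux.strictMonoOn_iterate hf (g := g)
  -- not in J means outside
  have hnotJ : ∀ t ∈ Set.Icc a b, f t ∉ Set.Icc a b := by
    intro t ht hmem
    have : f t ∈ f '' Set.Icc a b ∩ Set.Icc a b := ⟨⟨t, ht, rfl⟩, hmem⟩
    rw [hdisj] at this
    exact this
  -- main claim: for p q ∈ J, the oscillation sum is ≤ v
  have main : ∀ p ∈ Set.Icc a b, ∀ q ∈ Set.Icc a b, p ≤ q →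
      ∑ k ∈ Finset.range n, |φ (f^[k] q) - φ (f^[k] p)| ≤ v := by
    intro p hp q hq hpq
    have hpI : p ∈ Set.Icc (0:ℝ) 1 := hJ hp
    have hqI : q ∈ Set.Icc (0:ℝ) 1 := hJ hq
    have haI : a ∈ Set.Icc (0:ℝ) 1 := hJ (Set.left_mem_Icc.2 hab)
    have hbI : b ∈ Set.Icc (0:ℝ) 1 := hJ (Set.right_mem_Icc.2 hab)
    have hfa := hnotJ a (Set.left_mem_Icc.2 hab)
    have hfb := hnotJ b (Set.right_mem_Icc.2 hab)
    rw [Set.mem_Icc, not_and_or, not_le, not_le] at hfa hfb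
    -- establish: either b < f a (right) or f b < a (left)
    have hcase : b < f a ∨ f b < a := by
      rcases hfa with h | h
      · -- f a < a; then f b < a (otherwise fixed point in J)
        right
        rcases hfb with h' | h'
        · exact h'
        · exfalso
          -- IVT: f t - t changes sign on [a,b]
          have hcont : ContinuousOn (fun t => f t - t) (Set.Icc a b) :=
            (hf.contDiffOn.continuousOn.mono hJ).sub continuousOn_id
          have hIVT := intermediate_value_Icc hab hcont
          have h0mem : (0:ℝ) ∈ Set.Icc (f a - a) (f b - b) :=
            ⟨by linarith, by linarith⟩
          obtain ⟨c, hc, hc0⟩ := hIVT h0mem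
          have : f c = c := by dsimp at hc0; linarith
          exact hnotJ c hc (by rw [this]; exact hc)
      · exact Or.inl h
    rcases hcase with hR | hL
    · -- intervals move right: c k = f^[k] p, d k = f^[k] q
      apply DenjoyAux.sum_var_le φ
        (c := fun k => f^[k] p) (d := fun k => f^[k] q)
      · intro k _; exact hf.mapsTo.iterate k hpI
      · intro k _; exact hf.mapsTo.iterate k hqI
      · intro k _
        exact (hmonoIter k).monotoneOn hpI hqI hpq
      · intro k _
        have hfpI : f p ∈ Set.Icc (0:ℝ) 1 := hf.mapsTo hpI
        have hqfp : q ≤ f p := by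
          have : f a ≤ f p := (hmono.monotoneOn) haI hpI hp.1
          linarith [hq.2]
        have := (hmonoIter k).monotoneOn hqI hfpI hqfp
        rwa [← Function.iterate_succ_apply] at this
      · exact hv0
      · exact hv
    · -- intervals move left: c k = f^[n-1-k] p, d k = f^[n-1-k] q
      have hsum : ∑ k ∈ Finset.range n, |φ (f^[k] q) - φ (f^[k] p)|
          = ∑ k ∈ Finset.range n, |φ (f^[n - 1 - k] q) - φ (f^[n - 1 - k] p)| :=
        (Finset.sum_range_reflect (fun k => |φ (f^[k] q) - φ (f^[k] p)|) n).symm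
      rw [hsum]
      apply DenjoyAux.sum_var_le φ
        (c := fun k => f^[n - 1 - k] p) (d := fun k => f^[n - 1 - k] q)
      · intro k _; exact hf.mapsTo.iterate _ hpI
      · intro k _; exact hf.mapsTo.iterate _ hqI
      · intro k _
        exact (hmonoIter _).monotoneOn hpI hqI hpq
      · intro k hk
        have hfqI : f q ∈ Set.Icc (0:ℝ) 1 := hf.mapsTo hqI
        have hfqp : f q ≤ p := by
          have : f q ≤ f b := (hmono.monotoneOn) hqI hbI hq.2
          linarith [hp.1]
        set j := n - 1 - (k + 1) with hj
        have hjk : n - 1 - k = j + 1 := by omega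
        rw [hjk]
        have := (hmonoIter j).monotoneOn hfqI hpI hfqp
        rwa [← Function.iterate_succ_apply] at this
      · exact hv0
      · exact hv
  -- oscillation sum symmetric bound
  have hosc : ∑ k ∈ Finset.range n, |φ (f^[k] x) - φ (f^[k] y)| ≤ v := by
    rcases le_total x y with h | h
    · have := main x hx y hy h
      simpa [abs_sub_comm] using this
    · exact main y hy x hx h
  -- derivative positivity and log formula
  have hDpos : ∀ z ∈ Set.Icc (0:ℝ) 1, 0 < derivWithin (f^[n]) (Set.Icc 0 1) z := by
    intro z hz
    rw [DenjoyAux.derivWithin_iterate hf n hz]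
    exact Finset.prod_pos fun k _ => hf.deriv_pos _ (hf.mapsTo.iterate k hz)
  have hlog : ∀ z ∈ Set.Icc (0:ℝ) 1,
      Real.log (derivWithin (f^[n]) (Set.Icc 0 1) z)
        = ∑ k ∈ Finset.range n, φ (f^[k] z) := by
    intro z hz
    rw [DenjoyAux.derivWithin_iterate hf n hz]
    exact Real.log_prod fun k _ => (hf.deriv_pos _ (hf.mapsTo.iterate k hz)).ne'
  set Dx := derivWithin (f^[n]) (Set.Icc 0 1) x with hDx
  set Dy := derivWithin (f^[n]) (Set.Icc 0 1) y with hDy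
  have hDxpos : 0 < Dx := hDpos x hxI
  have hDypos : 0 < Dy := hDpos y hyI
  have hLbound : |Real.log Dx - Real.log Dy| ≤ v := by
    rw [hlog x hxI, hlog y hyI, ← Finset.sum_sub_distrib]
    exact (Finset.abs_sum_le_sum_abs _ _).trans hosc
  rw [abs_le] at hLbound
  have hratio : Dx / Dy = Real.exp (Real.log Dx - Real.log Dy) := by
    rw [Real.exp_sub, Real.exp_log hDxpos, Real.exp_log hDypos]
  constructor
  · rw [hratio]; exact Real.exp_le_exp.2 hLbound.1
  · rw [hratio]; exact Real.exp_le_exp.2 hLbound.2
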